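/- Let M be the F₂-space with basis {[a] : a ∈ ℤ} and operations Sq^{2^n} given by [a]Sq^{2^n} = c(a − 2^n, n)[a − 2^n], where c(b, n) = 1 iff b mod 2^{n+1} ∈ [2^n, 2^{n+1}). Then for every k ≥ 0 and every x ∈ M satisfying xSq^{2^i} = 0 for all 0 ≤ i ≤ k, and for every i ≤ k, x lies in the image of the composite Sq^1Sq^2⋯Sq^{2^i} (operations applied left to right). -/

import Mathlib

noncomputable section

/-- The F₂-vector space with basis `{[a] : a ∈ ℤ}` (the dual `∇₁` of `F₂[t,t⁻¹]`). -/
abbrev Nabla : Type := ℤ →₀ ZMod 2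

/-- `c(b, n) = 1` iff `b mod 2^(n+1) ∈ [2^n, 2^(n+1))`. -/
def cc (b : ℤ) (n : ℕ) : ZMod 2 :=
  if (2 : ℤ) ^ n ≤ b % 2 ^ (n + 1) then 1 else 0

/-- The operation `Sq^{2^n}` on `∇₁`: `[a]Sq^{2^n} = c(a − 2^n, n)·[a − 2^n]`. -/
def sqN (n : ℕ) (x : Nabla) : Nabla :=
  x.sum fun a co => co • (cc (a - 2 ^ n) n • Finsupp.single (a - 2 ^ n) (1 : ZMod 2))

/-- `sqIter i y = y·Sq^{2^0}·Sq^{2^1}⋯Sq^{2^i}`: the composite `Sq^1Sq^2⋯Sq^{2^i}`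
applied left to right (as a right action, `Sq^1` first). -/
def sqIter : ℕ → Nabla → Nabla
  | 0, y => sqN 0 y
  | i + 1, y => sqN (i + 1) (sqIter i y)

/-- The shift `ψ^{2^m} : [a] ↦ [a + 2^m]`. -/
def psi (m : ℕ) (x : Nabla) : Nabla := Finsupp.mapDomain (· + 2 ^ m) x

lemma sqN_zero (n : ℕ) : sqN n 0 = 0 := Finsupp.sum_zero_index

lemma sqN_add (n : ℕ) (x y : Nabla) : sqN n (x + y) = sqN n x + sqN n y :=
  Finsupp.sum_add_index (fun _ _ => zero_smul _ _) (fun _ _ c1 c2 => add_smul c1 c2 _)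

lemma sqN_single (n : ℕ) (a : ℤ) (c : ZMod 2) :
    sqN n (Finsupp.single a c)
      = c • (cc (a - 2 ^ n) n • Finsupp.single (a - 2 ^ n) (1 : ZMod 2)) :=
  Finsupp.sum_single_index (zero_smul _ _)

lemma psi_zero (m : ℕ) : psi m 0 = 0 := Finsupp.mapDomain_zero

lemma psi_add (m : ℕ) (x y : Nabla) : psi m (x + y) = psi m x + psi m y :=
  Finsupp.mapDomain_add

lemma psi_single (m : ℕ) (a : ℤ) (c : ZMod 2) :
    psi m (Finsupp.single a c) = Finsupp.single (a + 2 ^ m) c :=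
  Finsupp.mapDomain_single

lemma psi_smul (m : ℕ) (c : ZMod 2) (x : Nabla) : psi m (c • x) = c • psi m x :=
  Finsupp.mapDomain_smul c x

/-- `c(b + 2^m, j) = c(b, j)` for `j < m`. -/
lemma cc_add_pow {j m : ℕ} (h : j < m) (b : ℤ) : cc (b + 2 ^ m) j = cc b j := by
  unfold cc
  have h2 : (2 : ℤ) ^ m = 2 ^ (j + 1) * 2 ^ (m - (j + 1)) := by
    rw [← pow_add]; congr 1; omega
  rw [h2, Int.add_mul_emod_self_left]

/-- `c(b, m) + c(b − 2^m, m) = 1`. -/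
lemma cc_flip (b : ℤ) (m : ℕ) : cc b m + cc (b - 2 ^ m) m = 1 := by
  have hN : (0 : ℤ) < 2 ^ (m + 1) := by positivity
  have hNeq : (2 : ℤ) ^ (m + 1) = 2 * 2 ^ m := by ring
  have hr0 : 0 ≤ b % 2 ^ (m + 1) := Int.emod_nonneg _ (by positivity)
  have hr1 : b % 2 ^ (m + 1) < 2 ^ (m + 1) := Int.emod_lt_of_pos _ hN
  have hm : (0 : ℤ) < 2 ^ m := by positivity
  have hsub : (b - 2 ^ m) % 2 ^ (m + 1) = (b % 2 ^ (m + 1) - 2 ^ m) % 2 ^ (m + 1) := by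
    conv_lhs => rw [Int.sub_emod]
    rw [Int.emod_eq_of_lt (le_of_lt hm) (by omega)]
  unfold cc
  by_cases hc : (2 : ℤ) ^ m ≤ b % 2 ^ (m + 1)
  · have : (b % 2 ^ (m + 1) - 2 ^ m) % 2 ^ (m + 1) = b % 2 ^ (m + 1) - 2 ^ m :=
      Int.emod_eq_of_lt (by omega) (by omega)
    rw [if_pos hc, hsub, this, if_neg (by omega)]; norm_num
  · have heq : (b % 2 ^ (m + 1) - 2 ^ m) % 2 ^ (m + 1) = b % 2 ^ (m + 1) + 2 ^ m := by
      have : b % 2 ^ (m + 1) - 2 ^ m = (b % 2 ^ (m + 1) + 2 ^ m) + 2 ^ (m + 1) * (-1) := by ring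
      rw [this, Int.add_mul_emod_self_left, Int.emod_eq_of_lt (by omega) (by omega)]
    rw [if_neg hc, hsub, heq, if_pos (by omega)]; norm_num

/-- `Sq^{2^j}` commutes with `ψ^{2^m}` for `j < m`. -/
lemma sqN_psi_comm {j m : ℕ} (h : j < m) (x : Nabla) :
    sqN j (psi m x) = psi m (sqN j x) := by
  induction x using Finsupp.induction with
  | zero => rw [psi_zero, sqN_zero, psi_zero]
  | single_add a c f _ _ ih =>
      rw [psi_add, sqN_add, sqN_add, psi_add, ih, psi_single, sqN_single, sqN_single,
        psi_smul, psi_smul, psi_single]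
      rw [show a + 2 ^ m - 2 ^ j = a - 2 ^ j + 2 ^ m from by ring, cc_add_pow h]

/-- The homotopy relation: `Sq^{2^m} ∘ ψ^{2^m} = id + ψ^{2^m} ∘ Sq^{2^m}` (char 2). -/
lemma sqN_psi_homotopy (m : ℕ) (x : Nabla) :
    sqN m (psi m x) = x + psi m (sqN m x) := by
  induction x using Finsupp.induction with
  | zero => rw [psi_zero, sqN_zero, psi_zero, add_zero]
  | single_add a c f _ _ ih =>
      rw [psi_add, sqN_add, sqN_add, psi_add, ih, psi_single, sqN_single, sqN_single,
        psi_smul, psi_smul, psi_single]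
      have harg : a + 2 ^ m - 2 ^ m = a := by ring
      have harg2 : a - 2 ^ m + 2 ^ m = a := by ring
      rw [harg, harg2]
      have hflip := cc_flip a m
      have h1 : cc a m = 1 + cc (a - 2 ^ m) m := by
        have key2 : ∀ u v : ZMod 2, u + v = 1 → u = 1 + v := by decide
        exact key2 _ _ hflip
      rw [h1, add_smul, smul_add, one_smul]
      have hsingle : c • Finsupp.single a (1 : ZMod 2) = Finsupp.single a c := by
        rw [Finsupp.smul_single, smul_eq_mul, mul_one]
      rw [hsingle]
      abel

/-- The explicit preimage `x ψ^{2^i} ψ^{2^{i−1}} ⋯ ψ^1`. -/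
def preim : ℕ → Nabla → Nabla
  | 0, x => psi 0 x
  | i + 1, x => preim i (psi (i + 1) x)

lemma key : ∀ i : ℕ, ∀ x : Nabla, (∀ j ≤ i, sqN j x = 0) → sqIter i (preim i x) = x := by
  intro i
  induction i with
  | zero =>
      intro x hx
      show sqN 0 (psi 0 x) = x
      rw [sqN_psi_homotopy, hx 0 le_rfl, psi_zero, add_zero]
  | succ i ih =>
      intro x hx
      show sqN (i + 1) (sqIter i (preim i (psi (i + 1) x))) = x
      rw [ih (psi (i + 1) x) (fun j hj => by
        rw [sqN_psi_comm (Nat.lt_succ_of_le hj), hx j (le_trans hj (Nat.le_succ i)),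
          psi_zero])]
      rw [sqN_psi_homotopy, hx (i + 1) le_rfl, psi_zero, add_zero]

/-- If `x ∈ ∇₁` satisfies `xSq^{2^i} = 0` for all `i ≤ k`, then for every `i ≤ k`,
`x` lies in the image of the composite `Sq^1Sq^2⋯Sq^{2^i}`. -/
theorem stmt_19 (k : ℕ) (x : Nabla) (hx : ∀ i ≤ k, sqN i x = 0) :
    ∀ i ≤ k, ∃ y : Nabla, sqIter i y = x := by
  intro i hi
  exact ⟨preim i x, key i x fun j hj => hx j (le_trans hj hi)⟩
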